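/- arXiv:1003.1550 — 2 statements merged into one kernel-verified Lean document; each statement's English description precedes it below -/
import Mathlib

section
/- Suppose 𝕋ⁿ = ℝ^{m×n}, f is implementable and satisfies non-imposition. For all pairwise distinct a, b, c ∈ A: if β ∈ P^f(a,b) and α ∈ P^f(b,c), then (β + α) ∈ P^f(a,c). -/
open Function

/-- A type profile: column `t a` is the utility vector in `ℝⁿ` for alternative `a`;
agent `i`'s type (row) is `fun a => t a i`.  The domain is unrestricted: `𝕋ⁿ = ℝ^{m×n}`. -/
abbrev Profile (n : ℕ) (A : Type*) := A → Fin n → ℝ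

/-- Payment rule `p` implements `f` in dominant strategies:
no agent `i` can gain by a unilateral deviation (a change of his own row only). -/
def Implements {n : ℕ} {A : Type*} (f : Profile n A → A)
    (p : Profile n A → Fin n → ℝ) : Prop :=
  ∀ t s : Profile n A, ∀ i : Fin n,
    (∀ j : Fin n, j ≠ i → ∀ a : A, s a j = t a j) →
    t (f t) i + p t i ≥ t (f s) i + p s i

/-- `f` is implementable in dominant strategies. -/
def Implementable {n : ℕ} {A : Type*} (f : Profile n A → A) : Prop :=
  ∃ p, Implements f p

/-- The choice set `C^f(t)`: alternatives `a` such that raising the column of `a`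
by any strictly positive `ε` makes `f` choose `a`. -/
def ChoiceSet {n : ℕ} {A : Type*} [DecidableEq A]
    (f : Profile n A → A) (t : Profile n A) : Set A :=
  {a | ∀ ε : Fin n → ℝ, (∀ i, 0 < ε i) →
    f (Function.update t a (t a + ε)) = a}

/-- `f` is neutral: permuting the columns of a profile permutes the choice set
accordingly (the profile `s` induced by `ρ` has `s^{ρ a} = t^a`, i.e. `s b = t (ρ⁻¹ b)`). -/
def Neutral {n : ℕ} {A : Type*} [DecidableEq A] (f : Profile n A → A) : Prop :=
  ∀ t : Profile n A, ∀ ρ : Equiv.Perm A,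
    ChoiceSet f (fun b => t (ρ.symm b)) = ρ '' ChoiceSet f t

/-- `f` satisfies non-imposition: every alternative is chosen at some profile. -/
def NonImposition {n : ℕ} {A : Type*} (f : Profile n A → A) : Prop :=
  ∀ a : A, ∃ t : Profile n A, f t = a

/-- The `P`-set of the pair `(a,b)`. -/
def RPSet {n : ℕ} {A : Type*} [DecidableEq A] (f : Profile n A → A) (a b : A) :
    Set (Fin n → ℝ) :=
  {α | ∃ t : Profile n A, a ∈ ChoiceSet f t ∧ t a - t b = α}

/-- The profile `1^a_ε`: column `a` equals the constant vector `ε·𝟙`, all other columns are `0`. -/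
def OneProf {n : ℕ} {A : Type*} [DecidableEq A] (a : A) (ε : ℝ) : Profile n A :=
  fun b => if b = a then (fun _ => ε) else 0

private lemma wmon {n : ℕ} {A : Type*} {f : Profile n A → A} {p}
    (hp : Implements f p) (t s : Profile n A) (i : Fin n)
    (h : ∀ j : Fin n, j ≠ i → ∀ a : A, s a j = t a j) :
    s (f s) i - s (f t) i ≥ t (f s) i - t (f t) i := by
  have h1 := hp t s i h
  have h2 := hp s t i (fun j hj a => (h j hj a).symm)
  linarith

private def hyb {n : ℕ} {A : Type*} (t s : Profile n A) (k : ℕ) : Profile n A :=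
  fun z i => if (i : ℕ) < k then s z i else t z i

private lemma mon_strict {n : ℕ} {A : Type*} {f : Profile n A → A} {p}
    (hp : Implements f p) (t s : Profile n A) (x : A) (hft : f t = x)
    (h : ∀ y, y ≠ x → ∀ i : Fin n, s x i - s y i > t x i - t y i) :
    f s = x := by
  have key : ∀ k : ℕ, f (hyb t s k) = x := by
    intro k
    induction k with
    | zero =>
      have h0 : hyb t s 0 = t := by
        funext z i; simp [hyb]
      rw [h0, hft]
    | succ k ih =>
      by_cases hk : k < n
      · have hrow : ∀ j : Fin n, j ≠ ⟨k, hk⟩ → ∀ z, hyb t s (k+1) z j = hyb t s k z j := by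
          intro j hj z
          have hjk : (j : ℕ) ≠ k := fun hc => hj (Fin.ext hc)
          simp only [hyb]
          by_cases hlt : (j : ℕ) < k
          · rw [if_pos hlt, if_pos (by omega)]
          · rw [if_neg hlt, if_neg (by omega)]
        have hw := wmon hp (hyb t s k) (hyb t s (k+1)) ⟨k, hk⟩ hrow
        rw [ih] at hw
        by_contra hne
        have hstr := h (f (hyb t s (k+1))) hne ⟨k, hk⟩
        have e1 : ∀ z, hyb t s (k+1) z ⟨k, hk⟩ = s z ⟨k, hk⟩ := by
          intro z; simp [hyb]
        have e2 : ∀ z, hyb t s k z ⟨k, hk⟩ = t z ⟨k, hk⟩ := by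
          intro z; simp [hyb]
        rw [e1, e1, e2, e2] at hw
        linarith
      · have heq : hyb t s (k+1) = hyb t s k := by
          funext z i
          have hin : (i : ℕ) < n := i.isLt
          simp only [hyb]
          rw [if_pos (by omega), if_pos (by omega)]
        rw [heq, ih]
  have hn' : hyb t s n = s := by
    funext z i
    simp [hyb, i.isLt]
  rw [← hn', key n]

private lemma choice_of_f {n : ℕ} {A : Type*} [DecidableEq A] {f : Profile n A → A} {p}
    (hp : Implements f p) (t : Profile n A) : f t ∈ ChoiceSet f t := by
  intro ε hε
  apply mon_strict hp t _ (f t) rfl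
  intro y hy i
  rw [Function.update_self, Function.update_of_ne hy]
  have := hε i
  simp only [Pi.add_apply]
  linarith

private lemma dom {n : ℕ} {A : Type*} [DecidableEq A] {f : Profile n A → A} {p}
    (hp : Implements f p) {t t' : Profile n A} {x : A} (hx : x ∈ ChoiceSet f t)
    (hd : ∀ y, y ≠ x → ∀ i, t' x i - t' y i ≥ t x i - t y i) :
    x ∈ ChoiceSet f t' := by
  intro ε hε
  have h0 := hx (fun i => ε i / 2) (fun i => by have := hε i; linarith)
  apply mon_strict hp _ _ x h0
  intro y hy i
  rw [Function.update_self, Function.update_of_ne hy,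
      Function.update_self, Function.update_of_ne hy]
  have h1 := hε i
  have h2 := hd y hy i
  simp only [Pi.add_apply]
  linarith

private lemma excl {n : ℕ} {A : Type*} [Fintype A] [DecidableEq A] {f : Profile n A → A} {p}
    (hp : Implements f p) {X Y : A} (hXY : X ≠ Y)
    {T R : Profile n A} (hX : X ∈ ChoiceSet f T) (hY : Y ∈ ChoiceSet f R)
    {ε : Fin n → ℝ} (hε : ∀ i, 0 < ε i)
    (hdiff : ∀ i, R X i - R Y i = T X i - T Y i + ε i) : False := by
  obtain ⟨K, hK⟩ := Finset.exists_le ((Finset.univ : Finset (A × Fin n)).image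
      (fun zi => max (T X zi.2 - T zi.1 zi.2 - (T X zi.2 - T Y zi.2)) (R Y zi.2 - R zi.1 zi.2)))
  have hK1 : ∀ (z : A) (i : Fin n), T X i - T z i - (T X i - T Y i) ≤ K := by
    intro z i
    have := hK _ (Finset.mem_image_of_mem _ (Finset.mem_univ (z, i)))
    exact le_trans (le_max_left _ _) this
  have hK2 : ∀ (z : A) (i : Fin n), R Y i - R z i ≤ K := by
    intro z i
    have := hK _ (Finset.mem_image_of_mem _ (Finset.mem_univ (z, i)))
    exact le_trans (le_max_right _ _) this
  set γ : Fin n → ℝ := fun i => T X i - T Y i with hγ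
  set T₀ : Profile n A := fun z i => if z = X then γ i else if z = Y then 0 else -K with hT₀
  set R₀ : Profile n A := fun z i => if z = X then γ i + ε i else if z = Y then 0 else -K with hR₀
  have T₀X : ∀ i, T₀ X i = γ i := fun i => by simp [hT₀]
  have T₀Y : ∀ i, T₀ Y i = 0 := fun i => by simp [hT₀, Ne.symm hXY]
  have T₀z : ∀ z, z ≠ X → z ≠ Y → ∀ i, T₀ z i = -K := fun z h1 h2 i => by simp [hT₀, h1, h2]
  have R₀X : ∀ i, R₀ X i = γ i + ε i := fun i => by simp [hR₀]
  have R₀Y : ∀ i, R₀ Y i = 0 := fun i => by simp [hR₀, Ne.symm hXY]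
  have R₀z : ∀ z, z ≠ X → z ≠ Y → ∀ i, R₀ z i = -K := fun z h1 h2 i => by simp [hR₀, h1, h2]
  have hXT₀ : X ∈ ChoiceSet f T₀ := by
    apply dom hp hX
    intro y hy i
    rw [T₀X]
    by_cases hyY : y = Y
    · subst hyY
      rw [T₀Y]
      simp only [hγ]
      linarith
    · rw [T₀z y hy hyY]
      have := hK1 y i
      simp only [hγ]
      linarith
  have hYR₀ : Y ∈ ChoiceSet f R₀ := by
    apply dom hp hY
    intro y hy i
    rw [R₀Y]
    by_cases hyX : y = X
    · subst hyX
      rw [R₀X]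
      have := hdiff i
      simp only [hγ]
      linarith
    · rw [R₀z y hyX hy]
      have := hK2 y i
      linarith
  have hfT' := hXT₀ (fun i => ε i / 4) (fun i => by have := hε i; linarith)
  have hfR' := hYR₀ (fun i => ε i / 2) (fun i => by have := hε i; linarith)
  have hcon : f (Function.update R₀ Y (R₀ Y + fun i => ε i / 2)) = X := by
    apply mon_strict hp _ _ X hfT'
    intro y hy i
    have hεi := hε i
    rw [Function.update_of_ne hXY, Function.update_self, R₀X]
    simp only [Pi.add_apply, T₀X]
    by_cases hyY : y = Y
    · subst hyY
      rw [Function.update_self, Function.update_of_ne hXY.symm, T₀Y]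
      simp only [Pi.add_apply, R₀Y]
      linarith
    · rw [Function.update_of_ne hyY, Function.update_of_ne hy, R₀z y hy hyY, T₀z y hy hyY]
      linarith
  rw [hfR'] at hcon
  exact hXY hcon.symm

/-- for pairwise distinct `a, b, c`, if `β ∈ P^f(a,b)` and
`α ∈ P^f(b,c)`, then `β + α ∈ P^f(a,c)`. -/
theorem pset_additive
    {n : ℕ} {A : Type*} [Fintype A] [DecidableEq A]
    (hn : 0 < n) (hA : 3 ≤ Fintype.card A)
    (f : Profile n A → A)
    (hf : Implementable f) (hni : NonImposition f)
    (a b c : A) (hab : a ≠ b) (hbc : b ≠ c) (hac : a ≠ c)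
    (β α : Fin n → ℝ)
    (hβ : β ∈ RPSet f a b) (hα : α ∈ RPSet f b c) :
    β + α ∈ RPSet f a c := by
  obtain ⟨p, hp⟩ := hf
  obtain ⟨t, htC, htd⟩ := hβ
  obtain ⟨s, hsC, hsd⟩ := hα
  obtain ⟨u, hu⟩ := hni a
  have htd' : ∀ i, t a i - t b i = β i := fun i => congrFun htd i
  have hsd' : ∀ i, s b i - s c i = α i := fun i => congrFun hsd i
  obtain ⟨K0, hK0⟩ := Finset.exists_le ((Finset.univ : Finset (Fin n × A)).image
      (fun q => max (max (-(β q.1 + α q.1)) (-(α q.1))) (u a q.1 - u q.2 q.1)))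
  obtain ⟨C, hC⟩ : ∃ C : ℝ, C = max K0 0 := ⟨_, rfl⟩
  have hC0 : (0:ℝ) ≤ C := by rw [hC]; exact le_max_right _ _
  have hCb : ∀ (i : Fin n) (y : A), max (max (-(β i + α i)) (-(α i))) (u a i - u y i) ≤ C := by
    intro i y
    rw [hC]
    exact le_trans (hK0 _ (Finset.mem_image_of_mem _ (Finset.mem_univ (i, y)))) (le_max_left _ _)
  have hC1 : ∀ i, -(β i + α i) ≤ C :=
    fun i => le_trans (le_trans (le_max_left _ _) (le_max_left _ _)) (hCb i a)
  have hC2 : ∀ i, -(α i) ≤ C :=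
    fun i => le_trans (le_trans (le_max_right _ _) (le_max_left _ _)) (hCb i a)
  have hC3 : ∀ i y, u a i - u y i ≤ C := fun i y => le_trans (le_max_right _ _) (hCb i y)
  obtain ⟨M, hM⟩ : ∃ M : ℝ, M = 2*C + 2 := ⟨_, rfl⟩
  obtain ⟨rP, hrP⟩ : ∃ g : (Fin n → ℝ) → Profile n A, g = fun ε y i =>
      if y = a then β i + α i + 2*ε i else if y = b then α i + ε i
      else if y = c then 0 else -M := ⟨_, rfl⟩
  have rPa : ∀ ε i, rP ε a i = β i + α i + 2*ε i := fun ε i => by simp [hrP]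
  have rPb : ∀ ε i, rP ε b i = α i + ε i := fun ε i => by simp [hrP, Ne.symm hab]
  have rPc : ∀ ε i, rP ε c i = 0 := fun ε i => by simp [hrP, Ne.symm hac, Ne.symm hbc]
  have rPd : ∀ ε (d : A), d ≠ a → d ≠ b → d ≠ c → ∀ i, rP ε d i = -M :=
    fun ε d h1 h2 h3 i => by simp [hrP, h1, h2, h3]
  have claim1 : ∀ ε : Fin n → ℝ, (∀ i, 0 < ε i) → f (rP ε) = a := by
    intro ε hε
    by_contra hxa
    have hxC : f (rP ε) ∈ ChoiceSet f (rP ε) := choice_of_f hp _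
    by_cases hxb : f (rP ε) = b
    · rw [hxb] at hxC
      refine excl hp hab htC hxC hε (fun i => ?_)
      rw [rPa, rPb, htd']
      ring
    by_cases hxc : f (rP ε) = c
    · rw [hxc] at hxC
      refine excl hp hbc hsC hxC hε (fun i => ?_)
      rw [rPb, rPc, hsd']
      ring
    obtain ⟨w, hw⟩ : ∃ w : Profile n A, w = fun y (i : Fin n) =>
        if y = a then C + 2 else (0:ℝ) := ⟨_, rfl⟩
    have wa : ∀ i : Fin n, w a i = C + 2 := fun i => by simp [hw]
    have wz : ∀ y, y ≠ a → ∀ i : Fin n, w y i = 0 := fun y h i => by simp [hw, h]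
    have hdw : f (rP ε) ∈ ChoiceSet f w := by
      apply dom hp hxC
      intro y hy i
      have hεi := hε i
      rw [wz _ hxa, rPd ε _ hxa hxb hxc]
      by_cases hya : y = a
      · rw [hya, wa, rPa]
        have := hC1 i
        linarith
      by_cases hyb : y = b
      · rw [hyb, wz b (Ne.symm hab), rPb]
        have := hC2 i
        linarith
      by_cases hyc : y = c
      · rw [hyc, wz c (Ne.symm hac), rPc]
        linarith
      · rw [wz y hya, rPd ε y hya hyb hyc]
        linarith
    have h1 := hdw (fun _ => (1:ℝ)) (fun i => one_pos)
    have h2 : f (Function.update w (f (rP ε)) (w (f (rP ε)) + fun _ => (1:ℝ))) = a := by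
      apply mon_strict hp u _ a hu
      intro y hy i
      have h3 := hC3 i y
      rw [Function.update_of_ne (Ne.symm hxa), wa]
      by_cases hyd : y = f (rP ε)
      · rw [hyd] at h3 ⊢
        rw [Function.update_self]
        simp only [Pi.add_apply]
        rw [wz _ hxa]
        linarith
      · rw [Function.update_of_ne hyd, wz y hy]
        linarith
    rw [h1] at h2
    exact hxa h2
  obtain ⟨r, hr⟩ : ∃ r : Profile n A, r = fun y (i : Fin n) =>
      if y = a then β i + α i else if y = b then α i
      else if y = c then 0 else -M := ⟨_, rfl⟩
  have ra : ∀ i, r a i = β i + α i := fun i => by simp [hr]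
  have rb : ∀ i, r b i = α i := fun i => by simp [hr, Ne.symm hab]
  have rc : ∀ i, r c i = 0 := fun i => by simp [hr, Ne.symm hac, Ne.symm hbc]
  have rd : ∀ y, y ≠ a → y ≠ b → y ≠ c → ∀ i, r y i = -M :=
    fun y h1 h2 h3 i => by simp [hr, h1, h2, h3]
  have haC : a ∈ ChoiceSet f r := by
    intro ε hε
    apply mon_strict hp (rP (fun i => ε i / 3)) _ a
      (claim1 _ (fun i => by have := hε i; linarith))
    intro y hy i
    have hεi := hε i
    rw [Function.update_self, Function.update_of_ne hy]
    simp only [Pi.add_apply, ra, rPa]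
    by_cases hyb : y = b
    · rw [hyb]
      simp only [rb, rPb]
      linarith
    by_cases hyc : y = c
    · rw [hyc]
      simp only [rc, rPc]
      linarith
    · rw [rd y hy hyb hyc, rPd _ y hy hyb hyc]
      linarith
  refine ⟨r, haC, ?_⟩
  funext i
  simp only [Pi.sub_apply, Pi.add_apply, ra, rc]
  ring
end

section
/- Suppose 𝕋ⁿ = ℝ^{m×n}, f is implementable and satisfies non-imposition. Define κ : A → ℝ by κ(a) = 0 for a ∈ C^f(0) and κ(a) = inf{ε ∈ ℝ, ε ≥ 0 : a ∈ C^f(1^a_ε)} for a ∉ C^f(0), where 1^a_ε is the profile whose column for a is ε·𝟙 and whose other columns are zero. Let t be the type profile with t^a = κ(a)·𝟙 for every a ∈ A. Then C^f(t) = A. -/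
open Function

section Lemmas
variable {n : ℕ} {A : Type*} [DecidableEq A] {f : Profile n A → A}
    {p : Profile n A → Fin n → ℝ}

/-- Lemma A: strictly improving column `a` relative to all others preserves the outcome. -/
lemma lemA (hp : Implements f p) {t s : Profile n A} {a : A} (hft : f t = a)
    (hst : ∀ i : Fin n, ∀ b : A, b ≠ a → t a i - t b i < s a i - s b i) :
    f s = a := by
  have key : ∀ k : ℕ, k ≤ n →
      f (fun b i => if (i : ℕ) < k then s b i else t b i) = a := by
    intro k
    induction k with
    | zero => intro _; simpa using hft
    | succ k ih =>
      intro hk1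
      have hk : k < n := Nat.lt_of_succ_le hk1
      have hprev := ih (Nat.le_of_succ_le hk1)
      set i : Fin n := ⟨k, hk⟩ with hi
      set u : Profile n A := fun b j => if (j : ℕ) < k then s b j else t b j with hu
      set v : Profile n A := fun b j => if (j : ℕ) < k + 1 then s b j else t b j with hv
      have hrow : ∀ j : Fin n, j ≠ i → ∀ b, v b j = u b j := by
        intro j hj b
        have hjk : (j : ℕ) ≠ k := fun h => hj (Fin.ext h)
        by_cases h : (j : ℕ) < k
        · simp [u, v, h, Nat.lt_succ_of_lt h]; intro h'; omega
        · have h2 : ¬ (j : ℕ) < k + 1 := by omega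
          simp [u, v, h, h2]; intro h'; omega
      by_contra hne
      have hba : f v ≠ a := hne
      have h1 := hp u v i hrow
      have h2 := hp v u i (fun j hj c => (hrow j hj c).symm)
      rw [hprev] at h1 h2
      have huv : ∀ c, u c i = t c i ∧ v c i = s c i := by
        intro c
        constructor
        · simp [u, hi]
        · simp [v, hi]
      have hst' := hst i (f v) hba
      have e1 := (huv a).1
      have e2 := (huv a).2
      have e3 := (huv (f v)).1
      have e4 := (huv (f v)).2
      linarith
  have := key n le_rfl
  simpa using this

/-- The chosen alternative is always in the choice set. -/
lemma mem_choiceSet_self (hp : Implements f p) (t : Profile n A) :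
    f t ∈ ChoiceSet f t := by
  intro ε hε
  refine lemA hp rfl ?_
  intro i b hb
  rw [Function.update_self, Function.update_of_ne hb]
  simp only [Pi.add_apply]
  linarith [hε i]

/-- Lemma B: the choice set is monotone in the column differences. -/
lemma lemB (hp : Implements f p) {t s : Profile n A} {a : A}
    (ha : a ∈ ChoiceSet f t)
    (hst : ∀ i : Fin n, ∀ b : A, b ≠ a → t a i - t b i ≤ s a i - s b i) :
    a ∈ ChoiceSet f s := by
  intro ε hε
  have h1 : f (Function.update t a (t a + fun i => ε i / 2)) = a :=
    ha _ (fun i => half_pos (hε i))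
  refine lemA hp h1 ?_
  intro i b hb
  rw [Function.update_self, Function.update_self,
    Function.update_of_ne hb, Function.update_of_ne hb]
  simp only [Pi.add_apply]
  have := hst i b hb
  have := hε i
  linarith

lemma exists_bound {n : ℕ} {A : Type*} [Fintype A] (hn : 0 < n) (g : Fin n → A → ℝ) :
    ∃ M : ℝ, ∀ i c, g i c ≤ M := by
  cases isEmpty_or_nonempty A with
  | inl h => exact ⟨0, fun i c => (h.false c).elim⟩
  | inr h =>
    haveI : Nonempty (Fin n) := ⟨⟨0, hn⟩⟩
    obtain ⟨pr, hpr⟩ := Finite.exists_max (fun pr : Fin n × A => g pr.1 pr.2)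
    exact ⟨g pr.1 pr.2, fun i c => hpr (i, c)⟩

end Lemmas

section Lemmas2
variable {n : ℕ} {A : Type*} [Fintype A] [DecidableEq A] {f : Profile n A → A}
    {p : Profile n A → Fin n → ℝ}

/-- Lemma C: two alternatives cannot each be in a choice set while jointly
"strictly beating" each other. -/
lemma lemC (hp : Implements f p) (hn : 0 < n) {t t' : Profile n A} {a b : A}
    (hab : a ≠ b) (ha : a ∈ ChoiceSet f t) (hb : b ∈ ChoiceSet f t')
    (hlt : ∀ i, (t a i - t b i) + (t' b i - t' a i) < 0) : False := by
  set α : Fin n → ℝ := fun i => t a i - t b i with hα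
  set ε : Fin n → ℝ := fun i => -((t a i - t b i) + (t' b i - t' a i)) / 2 with hε
  have hεpos : ∀ i, 0 < ε i := by
    intro i; have := hlt i; simp only [hε]; linarith
  obtain ⟨M, hM⟩ := exists_bound hn
    (fun i (c : A) => max (t a i - t c i - α i) (t' b i - t' c i + ε i))
  set w : Profile n A := fun x i =>
    if x = a then α i + ε i else if x = b then 0 else -M with hw
  have hwa : ∀ i, w a i = α i + ε i := by intro i; simp [hw]
  have hwb : ∀ i, w b i = 0 := by intro i; simp [hw, hab.symm]
  have hwc : ∀ x, x ≠ a → x ≠ b → ∀ i, w x i = -M := by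
    intro x hxa hxb i; simp [hw, hxa, hxb]
  -- u1 : column a lowered to α
  set u1 : Profile n A := Function.update w a α with hu1
  have ha1 : a ∈ ChoiceSet f u1 := by
    refine lemB hp ha ?_
    intro i x hx
    rw [hu1, Function.update_self, Function.update_of_ne hx]
    by_cases hxb : x = b
    · subst hxb; rw [hwb]; simp [hα]
    · rw [hwc x hx hxb]
      have := (hM i x).trans (le_refl M) |>.trans' (le_max_left _ _)
      linarith [le_max_left (t a i - t x i - α i) (t' b i - t' x i + ε i), hM i x]
  -- u2 : column b lowered to -ε
  set u2 : Profile n A := Function.update w b (fun i => -ε i) with hu2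
  have hb2 : b ∈ ChoiceSet f u2 := by
    refine lemB hp hb ?_
    intro i x hx
    rw [hu2, Function.update_self, Function.update_of_ne hx]
    by_cases hxa : x = a
    · subst hxa
      rw [hwa]
      simp only [hα, hε]
      linarith
    · rw [hwc x hxa hx]
      have := hM i x
      have := le_max_right (t a i - t x i - α i) (t' b i - t' x i + ε i)
      linarith
  have hw1 : Function.update u1 a (u1 a + ε) = w := by
    funext x i
    rcases eq_or_ne x a with rfl | hx
    · rw [Function.update_self]
      simp only [Pi.add_apply, hu1, Function.update_self]
      rw [hwa]
    · rw [Function.update_of_ne hx, hu1, Function.update_of_ne hx]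
  have hw2 : Function.update u2 b (u2 b + ε) = w := by
    funext x i
    rcases eq_or_ne x b with rfl | hx
    · rw [Function.update_self]
      simp only [Pi.add_apply, hu2, Function.update_self]
      rw [hwb]; ring
    · rw [Function.update_of_ne hx, hu2, Function.update_of_ne hx]
  have hfa : f w = a := by rw [← hw1]; exact ha1 ε hεpos
  have hfb : f w = b := by rw [← hw2]; exact hb2 ε hεpos
  exact hab (hfa ▸ hfb)

/-- Lemma D: composition of pair dominations through a third alternative. -/
lemma lemD (hp : Implements f p) (hn : 0 < n) {t t' : Profile n A} {a b c : A}
    (hab : a ≠ b) (hbc : b ≠ c) (hac : a ≠ c)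
    (ha : a ∈ ChoiceSet f t) (hb : b ∈ ChoiceSet f t') {ε : ℝ} (hε : 0 < ε) :
    ∃ u : Profile n A, a ∈ ChoiceSet f u ∧
      ∀ i, u a i - u c i = (t a i - t b i) + (t' b i - t' c i) + 2 * ε := by
  set α : Fin n → ℝ := fun i => t a i - t b i with hα
  set β : Fin n → ℝ := fun i => t' b i - t' c i with hβ
  obtain ⟨M, hM⟩ := exists_bound hn (fun i (d : A) => t' b i - t' d i - β i - ε + 1)
  set u : Profile n A := fun x i =>
    if x = a then α i + β i + 2 * ε else if x = b then β i + ε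
    else if x = c then 0 else -M with hu
  have hua : ∀ i, u a i = α i + β i + 2 * ε := by intro i; simp [hu]
  have hub : ∀ i, u b i = β i + ε := by intro i; simp [hu, hab.symm]
  have huc : ∀ i, u c i = 0 := by intro i; simp [hu, hac.symm, hbc.symm]
  have hud : ∀ x, x ≠ a → x ≠ b → x ≠ c → ∀ i, u x i = -M := by
    intro x h1 h2 h3 i; simp [hu, h1, h2, h3]
  have hy : f u ∈ ChoiceSet f u := mem_choiceSet_self hp u
  by_cases hya : f u = a
  · refine ⟨u, hya ▸ hy, ?_⟩
    intro i; rw [hua, huc]; ring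
  by_cases hyb : f u = b
  · exact absurd (lemC hp hn hab ha (hyb ▸ hy) (fun i => by
      rw [hub, hua]; simp only [hα]; linarith)) not_false
  by_cases hyc : f u = c
  · exact absurd (lemC hp hn hbc hb (hyc ▸ hy) (fun i => by
      rw [huc, hub]; simp only [hβ]; linarith)) not_false
  · refine absurd (lemC hp hn (fun h => hyb h.symm) hb hy (fun i => ?_)) not_false
    rw [hud (f u) hya hyb hyc, hub]
    have := hM i (f u)
    linarith
end Lemmas2

section Lemmas3
variable {n : ℕ} {A : Type*} [Fintype A] [DecidableEq A] {f : Profile n A → A}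
    {p : Profile n A → Fin n → ℝ}

lemma kappa_key (hp : Implements f p) (hni : NonImposition f) (hn : 0 < n)
    (κ : A → ℝ)
    (hκ0 : ∀ a ∈ ChoiceSet f (0 : Profile n A), κ a = 0)
    (hκ1 : ∀ a ∉ ChoiceSet f (0 : Profile n A),
      κ a = sInf {ε : ℝ | 0 ≤ ε ∧ a ∈ ChoiceSet f (OneProf a ε)})
    (a : A) :
    0 ≤ κ a ∧ ∀ η : ℝ, 0 < η → a ∈ ChoiceSet f (OneProf a (κ a + η)) := by
  by_cases h0 : a ∈ ChoiceSet f (0 : Profile n A)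
  · have hκ := hκ0 a h0
    refine ⟨hκ.ge, ?_⟩
    intro η hη
    rw [hκ, zero_add]
    refine lemB hp h0 ?_
    intro i x hx
    have h1 : OneProf a η a i = η := by simp [OneProf]
    have h2 : OneProf a η x i = 0 := by simp [OneProf, hx]
    rw [h1, h2]
    simp only [Pi.zero_apply]
    linarith
  · have hκ : κ a = sInf {ε : ℝ | 0 ≤ ε ∧ a ∈ ChoiceSet f (OneProf a ε)} := hκ1 a h0
    have hSne : ({ε : ℝ | 0 ≤ ε ∧ a ∈ ChoiceSet f (OneProf a ε)}).Nonempty := by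
      obtain ⟨t, ht⟩ := hni a
      have haC : a ∈ ChoiceSet f t := ht ▸ mem_choiceSet_self hp t
      obtain ⟨M0, hM0⟩ := exists_bound hn (fun i c => t a i - t c i)
      refine ⟨max M0 0, le_max_right _ _, lemB hp haC ?_⟩
      intro i x hx
      have h1 : OneProf a (max M0 0) a i = max M0 0 := by simp [OneProf]
      have h2 : OneProf a (max M0 0) x i = 0 := by simp [OneProf, hx]
      rw [h1, h2]
      have := hM0 i x
      have := le_max_left M0 0
      linarith
    have hbdd : BddBelow {ε : ℝ | 0 ≤ ε ∧ a ∈ ChoiceSet f (OneProf a ε)} :=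
      ⟨0, fun x hx => hx.1⟩
    have h0le : 0 ≤ κ a := by
      rw [hκ]; exact le_csInf hSne (fun x hx => hx.1)
    refine ⟨h0le, ?_⟩
    intro η hη
    have hlt : sInf {ε : ℝ | 0 ≤ ε ∧ a ∈ ChoiceSet f (OneProf a ε)} < κ a + η := by
      rw [← hκ]; linarith
    obtain ⟨e, heS, helt⟩ := exists_lt_of_csInf_lt hSne hlt
    refine lemB hp heS.2 ?_
    intro i x hx
    have h1 : OneProf a e a i = e := by simp [OneProf]
    have h2 : OneProf a e x i = 0 := by simp [OneProf, hx]
    have h3 : OneProf a (κ a + η) a i = κ a + η := by simp [OneProf]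
    have h4 : OneProf a (κ a + η) x i = 0 := by simp [OneProf, hx]
    rw [h1, h2, h3, h4]
    linarith

lemma key2 (hp : Implements f p) (hni : NonImposition f) (hn : 0 < n)
    (κ : A → ℝ)
    (hκ0 : ∀ a ∈ ChoiceSet f (0 : Profile n A), κ a = 0)
    (hκ1 : ∀ a ∉ ChoiceSet f (0 : Profile n A),
      κ a = sInf {ε : ℝ | 0 ≤ ε ∧ a ∈ ChoiceSet f (OneProf a ε)})
    {a x : A} (hax : x ≠ a) {η : ℝ} (hη : 0 < η) :
    ∃ u : Profile n A, a ∈ ChoiceSet f u ∧ ∀ i, u a i - u x i ≤ κ a - κ x + η := by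
  obtain ⟨hκa0, hamem⟩ := kappa_key hp hni hn κ hκ0 hκ1 a
  obtain ⟨hκx0, hxmem⟩ := kappa_key hp hni hn κ hκ0 hκ1 x
  haveI : Nonempty (Fin n) := ⟨⟨0, hn⟩⟩
  rcases eq_or_lt_of_le hκx0 with hx0 | hx0
  · refine ⟨OneProf a (κ a + η), hamem η hη, ?_⟩
    intro i
    have h1 : OneProf a (κ a + η) a i = κ a + η := by simp [OneProf]
    have h2 : OneProf a (κ a + η) x i = 0 := by simp [OneProf, hax]
    rw [h1, h2]
    linarith [hx0.symm]
  · have hx0' : x ∉ ChoiceSet f (0 : Profile n A) := by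
      intro h
      have := hκ0 x h
      linarith
    have hκx := hκ1 x hx0'
    have hη'pos : 0 < min (η/4) (κ x) := lt_min (by linarith) hx0
    have hη'le : min (η/4) (κ x) ≤ η/4 := min_le_left _ _
    have hη'leκ : min (η/4) (κ x) ≤ κ x := min_le_right _ _
    set ebar : ℝ := κ x - min (η/4) (κ x) with hebar
    have hebar0 : 0 ≤ ebar := by rw [hebar]; linarith
    have hnotin : x ∉ ChoiceSet f (OneProf x ebar) := by
      intro hmem
      have hin : ebar ∈ {ε : ℝ | 0 ≤ ε ∧ x ∈ ChoiceSet f (OneProf x ε)} := ⟨hebar0, hmem⟩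
      have hle := csInf_le ⟨0, fun y hy => hy.1⟩ hin
      rw [← hκx] at hle
      have : ebar < κ x := by rw [hebar]; linarith
      linarith
    simp only [ChoiceSet, Set.mem_setOf_eq] at hnotin
    push_neg at hnotin
    obtain ⟨ε₀, hε₀pos, hε₀ne⟩ := hnotin
    set δ : ℝ := (Finset.univ.inf' Finset.univ_nonempty ε₀) / 2 with hδ
    have hinfpos : 0 < Finset.univ.inf' Finset.univ_nonempty ε₀ :=
      (Finset.lt_inf'_iff _).mpr (fun i _ => hε₀pos i)
    have hδpos : 0 < δ := by rw [hδ]; linarith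
    have hδlt : ∀ i, δ < ε₀ i := by
      intro i
      have := Finset.inf'_le ε₀ (Finset.mem_univ i)
      rw [hδ]; linarith
    set v : Profile n A := OneProf x (ebar + δ) with hv
    have hyx : f v ≠ x := by
      intro hfx
      refine hε₀ne (lemA hp hfx ?_)
      intro i b hb
      have hv1 : v x i = ebar + δ := by simp [hv, OneProf]
      have hv2 : v b i = 0 := by simp [hv, OneProf, hb]
      have hs1 : Function.update (OneProf x ebar) x (OneProf x ebar x + ε₀) x i
          = ebar + ε₀ i := by
        rw [Function.update_self]; simp [OneProf]
      have hs2 : Function.update (OneProf x ebar) x (OneProf x ebar x + ε₀) b i = 0 := by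
        rw [Function.update_of_ne hb]; simp [OneProf, hb]
      rw [hv1, hv2, hs1, hs2]
      have := hδlt i
      linarith
    have hyC : f v ∈ ChoiceSet f v := mem_choiceSet_self hp v
    by_cases hya : f v = a
    · refine ⟨v, hya ▸ hyC, ?_⟩
      intro i
      have hane : a ≠ x := fun h => hax h.symm
      have hv1 : v a i = 0 := by simp [hv, OneProf, hane]
      have hv2 : v x i = ebar + δ := by simp [hv, OneProf]
      rw [hv1, hv2, hebar]
      linarith
    · have hay : a ≠ f v := fun h => hya h.symm
      have hanex : a ≠ x := fun h => hax h.symm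
      obtain ⟨u, huC, hueq⟩ := lemD hp hn hay hyx hanex
        (hamem (η/4) (by linarith)) hyC (show (0:ℝ) < η/8 by linarith)
      refine ⟨u, huC, ?_⟩
      intro i
      have heq := hueq i
      have h1 : OneProf a (κ a + η/4) a i = κ a + η/4 := by simp [OneProf]
      have h2 : OneProf a (κ a + η/4) (f v) i = 0 := by simp [OneProf, hya]
      have h3 : v (f v) i = 0 := by simp only [hv, OneProf] at hyx ⊢; simp [hyx]
      have h4 : v x i = ebar + δ := by simp [hv, OneProf]
      rw [h1, h2, h3, h4] at heq
      rw [heq, hebar]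
      linarith

end Lemmas3

/-- with `κ a = 0` for `a ∈ C^f(0)` and
`κ a = inf {ε ≥ 0 : a ∈ C^f(1^a_ε)}` otherwise, the profile `t` with
`t^a = κ(a)·𝟙` for every `a` has `C^f(t) = A`. -/
theorem choiceSet_at_kappa_profile_univ
    {n : ℕ} {A : Type*} [Fintype A] [DecidableEq A]
    (hn : 0 < n) (hA : 3 ≤ Fintype.card A)
    (f : Profile n A → A)
    (hf : Implementable f) (hni : NonImposition f)
    (κ : A → ℝ)
    (hκ0 : ∀ a ∈ ChoiceSet f (0 : Profile n A), κ a = 0)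
    (hκ1 : ∀ a ∉ ChoiceSet f (0 : Profile n A),
      κ a = sInf {ε : ℝ | 0 ≤ ε ∧ a ∈ ChoiceSet f (OneProf a ε)}) :
    ChoiceSet f (fun a _ => κ a) = (Set.univ : Set A) := by
  obtain ⟨p, hp⟩ := hf
  haveI : Nonempty (Fin n) := ⟨⟨0, hn⟩⟩
  ext a
  simp only [Set.mem_univ, iff_true, ChoiceSet, Set.mem_setOf_eq]
  intro ε hε
  set η : ℝ := (Finset.univ.inf' Finset.univ_nonempty ε) / 2 with hη
  have hinfpos : 0 < Finset.univ.inf' Finset.univ_nonempty ε :=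
    (Finset.lt_inf'_iff _).mpr (fun i _ => hε i)
  have hηpos : 0 < η := by rw [hη]; linarith
  have hηlt : ∀ i, η < ε i := by
    intro i
    have := Finset.inf'_le ε (Finset.mem_univ i)
    rw [hη]; linarith
  set u : Profile n A :=
    Function.update (fun c (_ : Fin n) => κ c) a ((fun c (_ : Fin n) => κ c) a + ε) with hu
  by_contra hne
  have hxa : f u ≠ a := hne
  have hyC : f u ∈ ChoiceSet f u := mem_choiceSet_self hp u
  obtain ⟨w, hwC, hwle⟩ := key2 hp hni hn κ hκ0 hκ1 hxa hηpos
  refine lemC hp hn (fun h => hxa h.symm) hwC hyC (fun i => ?_)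
  have h1 : u (f u) i = κ (f u) := by rw [hu, Function.update_of_ne hxa]
  have h2 : u a i = κ a + ε i := by
    rw [hu, Function.update_self]; simp
  rw [h1, h2]
  have := hwle i
  have := hηlt i
  linarith
end
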